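/- For the homomorphism $\psi: \mathbb{Z} \to \mathbb{Z}^2 \rtimes \Sigma_2$ corresponding to the 2-valued square root map on the circle, defined by $\psi(k) = (k/2, k/2; \mathrm{id})$ for $k$ even and $\psi(k) = ((k-1)/2, (k+1)/2; (1\,2))$ for $k$ odd, the generalized Reidemeister relation on $\mathbb{Z} \times \{1,2\}$ has exactly one equivalence class. -/

import Mathlib

/-- The component data of the homomorphism ψ : ℤ → ℤ² ⋊ Σ₂ for the 2-valued
square root map of the circle: φ₁(k) = k/2 (k even), (k-1)/2 (k odd);
φ₂(k) = k/2 (k even), (k+1)/2 (k odd); σ_k = id (k even), (1 2) (k odd). -/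
def sqrtPhi (j : Fin 2) (k : ℤ) : ℤ :=
  if Even k then k / 2
  else if j = 0 then (k - 1) / 2 else (k + 1) / 2

def sqrtSigma (k : ℤ) : Equiv.Perm (Fin 2) :=
  if Even k then 1 else Equiv.swap 0 1

/-- The generalized Reidemeister relation on ℤ × {1,2} for the square root map,
(α,i) ∼ (β,j) iff ∃ k, σ_k(j) = i and α = k + β + φⱼ(-k), has exactly one
equivalence class. -/
theorem stmt_9 (R : ℤ × Fin 2 → ℤ × Fin 2 → Prop)
    (hR : ∀ p q, R p q ↔ ∃ k : ℤ, sqrtSigma k q.2 = p.2 ∧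
      p.1 = k + q.1 + sqrtPhi q.2 (-k)) :
    Nat.card (Quot R) = 1 := by
  have key : ∀ p : ℤ × Fin 2, R p (0, 0) := by
    rintro ⟨α, i⟩
    rw [hR]
    fin_cases i
    · refine ⟨2 * α, ?_, ?_⟩
      · simp [sqrtSigma, even_two_mul]
      · have h : Even (-(2 * α)) := ⟨-α, by ring⟩
        simp only [sqrtPhi, if_pos h]
        omega
    · refine ⟨2 * α + 1, ?_, ?_⟩
      · have h : ¬ Even (2 * α + 1) := by rw [Int.even_iff]; omega
        rw [sqrtSigma, if_neg h]; simp
      · have h : ¬ Even (-(2 * α + 1)) := by rw [Int.even_iff]; omega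
        have : sqrtPhi 0 (-(2 * α + 1)) = -α - 1 := by
          simp [sqrtPhi, h]
          omega
        simp only [this]
        omega
  rw [Nat.card_eq_one_iff_exists]
  refine ⟨Quot.mk R (0, 0), fun q => ?_⟩
  induction q using Quot.ind with
  | _ p => exact Quot.sound (key p)
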